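/- Every group G has a torsion-free universal quotient: there exists a normal subgroup N of G such that the quotient G/N is torsion-free, and for every torsion-free group K and every homomorphism f : G → K, one has N ≤ ker f (so f factors through the quotient map G → G/N). -/

import Mathlib

/-- A monoid is torsion-free if no nontrivial element has finite order
(the definition of `Monoid.IsTorsionFree` in the older Mathlib). -/
def Monoid.IsTorsionFree (G : Type*) [Monoid G] : Prop :=
  ∀ g : G, g ≠ 1 → ¬IsOfFinOrder g

/-- Key lemma: if `G ⧸ H` is torsion-free (with `H` normal) and `g ^ n ∈ H` for `n > 0`,
then `g ∈ H`. -/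
theorem mem_of_pow_mem_of_torsionFree_quotient {G : Type} [Group G] {H : Subgroup G}
    [H.Normal] (hTF : Monoid.IsTorsionFree (G ⧸ H)) {g : G} {n : ℕ} (hn : 0 < n)
    (h : g ^ n ∈ H) : g ∈ H := by
  by_contra hg
  have hne : (QuotientGroup.mk g : G ⧸ H) ≠ 1 := by
    simpa [QuotientGroup.eq_one_iff] using hg
  apply hTF _ hne
  refine isOfFinOrder_iff_pow_eq_one.mpr ⟨n, hn, ?_⟩
  rw [← QuotientGroup.mk_pow, QuotientGroup.eq_one_iff]
  exact h

/-- Every group has a torsion-free universal quotient: there is a normal subgroup `N`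
of `G` such that `G ⧸ N` is torsion-free and every homomorphism from `G` to a
torsion-free group kills `N`. -/
theorem exists_torsionFree_universal_quotient (G : Type) [Group G] :
    ∃ (N : Subgroup G) (hN : N.Normal),
      letI := hN
      Monoid.IsTorsionFree (G ⧸ N) ∧
        ∀ (K : Type) [Group K], Monoid.IsTorsionFree K →
          ∀ f : G →* K, N ≤ f.ker := by
  classical
  set S : Set (Subgroup G) :=
    {H | ∃ _ : H.Normal, Monoid.IsTorsionFree (G ⧸ H)} with hS
  have hNorm : (sInf S).Normal := by
    constructor
    intro x hx g
    rw [Subgroup.mem_sInf] at hx ⊢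
    intro H hH
    obtain ⟨hnorm, _⟩ := id hH
    exact hnorm.conj_mem x (hx H hH) g
  letI := hNorm
  refine ⟨sInf S, hNorm, ?_, ?_⟩
  · -- torsion-free quotient
    intro x hx hfin
    obtain ⟨g, rfl⟩ := QuotientGroup.mk_surjective x
    obtain ⟨n, hn, hpow⟩ := isOfFinOrder_iff_pow_eq_one.mp hfin
    rw [← QuotientGroup.mk_pow, QuotientGroup.eq_one_iff] at hpow
    apply hx
    rw [QuotientGroup.eq_one_iff, Subgroup.mem_sInf]
    intro H hH
    obtain ⟨hnorm, hTF⟩ := id hH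
    have : g ^ n ∈ H := by
      rw [Subgroup.mem_sInf] at hpow
      exact hpow H hH
    exact mem_of_pow_mem_of_torsionFree_quotient hTF hn this
  · -- universal property
    intro K _ hK f
    have hker : f.ker ∈ S := by
      refine ⟨f.normal_ker, ?_⟩
      intro x hx hfin
      obtain ⟨g, rfl⟩ := QuotientGroup.mk_surjective x
      obtain ⟨n, hn, hpow⟩ := isOfFinOrder_iff_pow_eq_one.mp hfin
      rw [← QuotientGroup.mk_pow, QuotientGroup.eq_one_iff, MonoidHom.mem_ker,
        map_pow] at hpow
      have : f g = 1 := by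
        by_contra hfg
        exact hK _ hfg (isOfFinOrder_iff_pow_eq_one.mpr ⟨n, hn, hpow⟩)
      exact hx (by rwa [QuotientGroup.eq_one_iff, MonoidHom.mem_ker])
    exact sInf_le hker
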